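/- For all k₁, k₂ ∈ ℝ and every positive diagonal 3×3 matrix D, the operator norm satisfies ‖D·K·D⁻¹‖₂ ≥ 1. -/

import Mathlib

/-- The operator norm of a `3 × 3` real matrix acting on Euclidean `ℝ³` (largest singular value). -/
noncomputable def opNorm2 (A : Matrix (Fin 3) (Fin 3) ℝ) : ℝ :=
  ‖Matrix.toEuclideanCLM (𝕜 := ℝ) A‖

/-- The boundary coupling matrix `K`. -/
def Kmat (k₁ k₂ : ℝ) : Matrix (Fin 3) (Fin 3) ℝ :=
  !![-2 * k₁, 1, -k₂; 1, 0, 0; 1, 0, 0]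

lemma euclid_abs_apply_le (x : EuclideanSpace ℝ (Fin 3)) (i : Fin 3) : |x i| ≤ ‖x‖ := by
  have h := norm_inner_le_norm (𝕜 := ℝ) (EuclideanSpace.single i (1 : ℝ)) x
  simpa [EuclideanSpace.inner_single_left] using h

lemma entry_le_opNorm2 (A : Matrix (Fin 3) (Fin 3) ℝ) (i j : Fin 3) :
    |A i j| ≤ opNorm2 A := by
  set f := Matrix.toEuclideanCLM (𝕜 := ℝ) A
  have h1 : f (EuclideanSpace.single j 1) =
      (WithLp.equiv 2 (Fin 3 → ℝ)).symm (A.mulVec (Pi.single j 1)) := by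
    rw [← EuclideanSpace.toLp_single]
    exact Matrix.toEuclideanCLM_toLp A (Pi.single j 1)
  have h2 : ‖f (EuclideanSpace.single j 1)‖ ≤ ‖f‖ := by
    have := f.le_opNorm (EuclideanSpace.single j 1)
    simpa [EuclideanSpace.norm_single] using this
  have h3 : |A i j| ≤ ‖f (EuclideanSpace.single j 1)‖ := by
    have := euclid_abs_apply_le (f (EuclideanSpace.single j 1)) i
    rw [h1] at this ⊢
    simpa [Matrix.mulVec_single] using this
  exact h3.trans h2

theorem stmt_6 (k₁ k₂ : ℝ) (D : Matrix (Fin 3) (Fin 3) ℝ)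
    (hD : D.IsDiag) (hDpos : ∀ i, 0 < D i i) :
    1 ≤ opNorm2 (D * Kmat k₁ k₂ * D⁻¹) := by
  set d : Fin 3 → ℝ := fun i => D i i with hd
  have hDdiag : D = Matrix.diagonal d := (hD.diagonal_diag).symm
  have hne : ∀ i, d i ≠ 0 := fun i => (hDpos i).ne'
  have hinv : D⁻¹ = Matrix.diagonal (fun i => (d i)⁻¹) := by
    rw [hDdiag]
    apply Matrix.inv_eq_right_inv
    rw [Matrix.diagonal_mul_diagonal]
    have : (fun i => d i * (d i)⁻¹) = fun _ => (1 : ℝ) :=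
      funext fun i => mul_inv_cancel₀ (hne i)
    rw [this, Matrix.diagonal_one]
  set M := D * Kmat k₁ k₂ * D⁻¹ with hM
  have hentry : ∀ i j, M i j = d i * Kmat k₁ k₂ i j * (d j)⁻¹ := by
    intro i j
    rw [hM, hinv, hDdiag, Matrix.mul_diagonal, Matrix.diagonal_mul]
  have h01 : M 0 1 = d 0 * (d 1)⁻¹ := by
    rw [hentry]; norm_num [Kmat]
  have h10 : M 1 0 = d 1 * (d 0)⁻¹ := by
    rw [hentry]; norm_num [Kmat]
  have e01 := entry_le_opNorm2 M 0 1
  have e10 := entry_le_opNorm2 M 1 0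
  rcases le_total (d 0) (d 1) with h | h
  · -- d 1 / d 0 ≥ 1
    have : (1 : ℝ) ≤ d 1 * (d 0)⁻¹ := by
      rw [← div_eq_mul_inv]
      exact (one_le_div (hDpos 0)).mpr h
    calc (1 : ℝ) ≤ d 1 * (d 0)⁻¹ := this
      _ = |M 1 0| := by
          rw [h10, abs_of_pos (mul_pos (hDpos 1) (inv_pos.mpr (hDpos 0)))]
      _ ≤ opNorm2 M := e10
  · have : (1 : ℝ) ≤ d 0 * (d 1)⁻¹ := by
      rw [← div_eq_mul_inv]
      exact (one_le_div (hDpos 1)).mpr h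
    calc (1 : ℝ) ≤ d 0 * (d 1)⁻¹ := this
      _ = |M 0 1| := by
          rw [h01, abs_of_pos (mul_pos (hDpos 0) (inv_pos.mpr (hDpos 1)))]
      _ ≤ opNorm2 M := e01
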